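/- arXiv:1509.06015 — 2 statements merged into one kernel-verified Lean document; each statement's English description precedes it below -/
import Mathlib

section
/- Let r, γ, T* > 0 and let ρ, ψ ∈ B_{T*,γ}(r). Then for all s ∈ [0, T*] and x ∈ ℝ^d, |R₂(ρ_s, x) − R₂(ψ_s, x)| ≤ [ (3/2) ⟨c₁⟩ e^{γ⟨c₂⟩s} ( 2 e^{γ⟨c₂⟩s} r + e^{2γ⟨c₂⟩s} ⟨φ₁⟩ r² ) + 2 ⟨c₂⟩ e^{γ⟨c₂⟩s} ( e^{γ⟨c₂⟩s} ⟨φ₂⟩ r + 1 ) ] ‖ρ − ψ‖_{T*,γ}. -/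
open MeasureTheory Set

noncomputable section

/-- Euclidean space `ℝ^d`, modeled as functions `Fin d → ℝ`. -/
abbrev Rd (d : ℕ) := Fin d → ℝ

/-- The (sup) `L^∞` norm of a function on `ℝ^d`. -/
def linf {d : ℕ} (f : Rd d → ℝ) : ℝ := ⨆ x, |f x|

/-- Membership in `L^∞(ℝ^d)`: measurable and (everywhere) bounded. -/
def MemLinf {d : ℕ} (f : Rd d → ℝ) : Prop := Measurable f ∧ ∃ M : ℝ, ∀ x, |f x| ≤ M

/-- `h(ρ,x) = (1/2) ∬ (c₁(x,y;z)+c₁(y,x;z)) ρ(y) dy dz + ⟨c₂⟩`. -/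
def hker {d : ℕ} (c₁ : Rd d → Rd d → Rd d → ℝ) (C2 : ℝ) (ρ : Rd d → ℝ) (x : Rd d) : ℝ :=
  1/2 * (∫ y, ∫ z, (c₁ x y z + c₁ y x z) * ρ y) + C2

/-- `R₂(ρ,x)`, the positive part of the right-hand side of the kinetic equation. -/
def R2 {d : ℕ} (c₁ : Rd d → Rd d → Rd d → ℝ) (c₂ : Rd d → Rd d → ℝ)
    (φ₁ φ₂ : Rd d → ℝ) (ρ : Rd d → ℝ) (x : Rd d) : ℝ :=
  1/2 * (∫ y, ∫ z, c₁ y z x * Real.exp (-∫ u, φ₁ (x - u) * ρ u) * ρ y * ρ z)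
    + 1/2 * (∫ y, ∫ z, (c₁ x y z + c₁ y x z) *
        (1 - Real.exp (-∫ u, φ₁ (z - u) * ρ u)) * ρ x * ρ y)
    + (∫ y, c₂ y x * Real.exp (-∫ u, φ₂ (x - u) * ρ u) * ρ y)
    + (∫ y, c₂ x y * (1 - Real.exp (-∫ u, φ₂ (y - u) * ρ u)) * ρ x)

/-- The fixed point map `F` given by the right-hand side of the integral equation. -/
def Fmap {d : ℕ} (c₁ : Rd d → Rd d → Rd d → ℝ) (c₂ : Rd d → Rd d → ℝ)
    (φ₁ φ₂ : Rd d → ℝ) (C2 : ℝ) (ρ₀ : Rd d → ℝ) (ρ : ℝ → Rd d → ℝ) (t : ℝ) (x : Rd d) : ℝ :=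
  ρ₀ x * Real.exp (-∫ s in (0:ℝ)..t, hker c₁ C2 (ρ s) x)
    + ∫ s in (0:ℝ)..t, R2 c₁ c₂ φ₁ φ₂ (ρ s) x * Real.exp (-∫ σ in s..t, hker c₁ C2 (ρ σ) x)

/-- The weighted norm `‖ρ‖_{T,γ} = sup_{t∈[0,T]} e^{-γ⟨c₂⟩t} ‖ρ_t‖_{L^∞}`. -/
def normTg {d : ℕ} (T γ C2 : ℝ) (ρ : ℝ → Rd d → ℝ) : ℝ :=
  ⨆ t : Icc (0:ℝ) T, Real.exp (-(γ * C2 * t.1)) * linf (ρ t.1)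

/-- Continuity on `S ⊆ ℝ` of a curve of functions, in the `L^∞` norm. -/
def LinfContOn {d : ℕ} (S : Set ℝ) (ρ : ℝ → Rd d → ℝ) : Prop :=
  ∀ t ∈ S, ∀ ε > 0, ∃ δ > 0, ∀ s ∈ S, |s - t| < δ → linf (fun x => ρ s x - ρ t x) < ε

/-- Membership in the ball `B_{T,γ}(r) ⊆ C([0,T] → L^∞)`. -/
def memB {d : ℕ} (T γ C2 r : ℝ) (ρ : ℝ → Rd d → ℝ) : Prop :=
  LinfContOn (Icc 0 T) ρ ∧ (∀ t ∈ Icc (0:ℝ) T, MemLinf (ρ t)) ∧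
    (∀ t ∈ Icc (0:ℝ) T, ∀ x, 0 ≤ ρ t x) ∧ normTg T γ C2 ρ ≤ r

/-- Differentiability at `t` (within `S ⊆ ℝ`) of a curve, in the `L^∞` norm,
with derivative `g`. -/
def HasLinfDerivWithinAt {d : ℕ} (ρ : ℝ → Rd d → ℝ) (g : Rd d → ℝ) (S : Set ℝ) (t : ℝ) : Prop :=
  ∀ ε > 0, ∃ δ > 0, ∀ s ∈ S, |s - t| < δ →
    linf (fun x => ρ s x - ρ t x - (s - t) * g x) ≤ ε * |s - t|

/-- The right-hand side of the kinetic equation: `−ρ(x) h(ρ,x) + R₂(ρ,x)`. -/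
def kderiv {d : ℕ} (c₁ : Rd d → Rd d → Rd d → ℝ) (c₂ : Rd d → Rd d → ℝ)
    (φ₁ φ₂ : Rd d → ℝ) (C2 : ℝ) (ρ : Rd d → ℝ) : Rd d → ℝ :=
  fun x => -(ρ x) * hker c₁ C2 ρ x + R2 c₁ c₂ φ₁ φ₂ ρ x

/-- `ρ` is a (local) classical solution of the kinetic equation on `[0,T]` with initial
value `ρ₀`: nonnegative and `L^∞`-valued, continuously differentiable in the `L^∞` norm,
and satisfying `d/dt ρ_t = −ρ_t·h(ρ_t,·) + R₂(ρ_t,·)`, `ρ_0 = ρ₀`. -/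
def IsSol {d : ℕ} (c₁ : Rd d → Rd d → Rd d → ℝ) (c₂ : Rd d → Rd d → ℝ)
    (φ₁ φ₂ : Rd d → ℝ) (C2 : ℝ) (ρ₀ : Rd d → ℝ) (T : ℝ) (ρ : ℝ → Rd d → ℝ) : Prop :=
  (∀ t ∈ Icc (0:ℝ) T, MemLinf (ρ t)) ∧ (∀ t ∈ Icc (0:ℝ) T, ∀ x, 0 ≤ ρ t x) ∧
    ρ 0 = ρ₀ ∧
    (∀ t ∈ Icc (0:ℝ) T, HasLinfDerivWithinAt ρ (kderiv c₁ c₂ φ₁ φ₂ C2 (ρ t)) (Icc 0 T) t) ∧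
    LinfContOn (Icc 0 T) (fun t => kderiv c₁ c₂ φ₁ φ₂ C2 (ρ t))

lemma exp_diff_le {p q : ℝ} (hp : 0 ≤ p) (hq : 0 ≤ q) :
    |Real.exp (-p) - Real.exp (-q)| ≤ |p - q| := by
  wlog h : q ≤ p generalizing p q
  · rw [abs_sub_comm, abs_sub_comm p q]; exact this hq hp (le_of_not_ge h)
  · have h1 : Real.exp (-p) ≤ Real.exp (-q) := Real.exp_le_exp.2 (by linarith)
    rw [abs_of_nonpos (by linarith), abs_of_nonneg (by linarith)]
    have h2 : Real.exp (-q) - Real.exp (-p)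
        = Real.exp (-q) * (1 - Real.exp (-(p - q))) := by
      rw [mul_sub, mul_one, ← Real.exp_add]; ring_nf
    have h3 : 1 - Real.exp (-(p - q)) ≤ p - q := by
      have := Real.add_one_le_exp (-(p - q)); linarith
    have h4 : Real.exp (-q) ≤ 1 := Real.exp_le_one_iff.2 (by linarith)
    have h5 : (0:ℝ) ≤ 1 - Real.exp (-(p - q)) := by
      have : Real.exp (-(p - q)) ≤ 1 := Real.exp_le_one_iff.2 (by linarith)
      linarith
    nlinarith [Real.exp_nonneg (-q)]

lemma linf_nonneg {d : ℕ} (f : Rd d → ℝ) : 0 ≤ linf f :=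
  Real.iSup_nonneg fun _ => abs_nonneg _

lemma abs_le_linf {d : ℕ} {f : Rd d → ℝ} {M : ℝ} (h : ∀ x, |f x| ≤ M) (x : Rd d) :
    |f x| ≤ linf f :=
  le_ciSup ⟨M, by rintro _ ⟨y, rfl⟩; exact h y⟩ x

lemma linf_le {d : ℕ} {f : Rd d → ℝ} {M : ℝ} (h : ∀ x, |f x| ≤ M) : linf f ≤ M :=
  ciSup_le h

lemma linf_nonneg' {d : ℕ} (f : Rd d → ℝ) : 0 ≤ linf f :=
  Real.iSup_nonneg fun _ => abs_nonneg _
lemma abs_le_linf' {d : ℕ} {f : Rd d → ℝ} {M : ℝ} (h : ∀ x, |f x| ≤ M) (x : Rd d) :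
    |f x| ≤ linf f :=
  le_ciSup ⟨M, by rintro _ ⟨y, rfl⟩; exact h y⟩ x
lemma linf_le' {d : ℕ} {f : Rd d → ℝ} {M : ℝ} (h : ∀ x, |f x| ≤ M) : linf f ≤ M :=
  ciSup_le h

lemma linf_triangle {d : ℕ} {f g : Rd d → ℝ} {Mf Mg : ℝ}
    (hf : ∀ x, |f x| ≤ Mf) (hg : ∀ x, |g x| ≤ Mg) :
    linf f ≤ linf (fun x => f x - g x) + linf g := by
  apply linf_le'
  intro x
  have h1 : |f x - g x| ≤ linf (fun x => f x - g x) :=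
    abs_le_linf' (f := fun x => f x - g x) (M := Mf + Mg)
      (fun x => (abs_sub (f x) (g x)).trans (add_le_add (hf x) (hg x))) x
  have h2 := abs_le_linf' hg x
  calc |f x| = |(f x - g x) + g x| := by ring_nf
    _ ≤ |f x - g x| + |g x| := abs_add_le _ _
    _ ≤ _ := add_le_add h1 h2

/-- The `linf`-norm of a continuous curve is bounded on `[0,T]`. -/
lemma linf_family_bounded {d : ℕ} {T : ℝ} {ρ : ℝ → Rd d → ℝ}
    (hcont : LinfContOn (Icc 0 T) ρ) (hmem : ∀ t ∈ Icc (0:ℝ) T, MemLinf (ρ t)) :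
    ∃ C, ∀ t ∈ Icc (0:ℝ) T, linf (ρ t) ≤ C := by
  have hco : ContinuousOn (fun t => linf (ρ t)) (Icc 0 T) := by
    intro t ht
    rw [Metric.continuousWithinAt_iff]
    intro ε hε
    obtain ⟨δ, hδ, hδ'⟩ := hcont t ht ε hε
    refine ⟨δ, hδ, fun s hs hst => ?_⟩
    rw [Real.dist_eq] at hst ⊢
    obtain ⟨_, Ms, hMs⟩ := hmem s hs
    obtain ⟨_, Mt, hMt⟩ := hmem t ht
    have key := hδ' s hs hst
    have key2 : linf (fun x => ρ t x - ρ s x) < ε := by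
      have : (fun x => ρ t x - ρ s x) = fun x => -(ρ s x - ρ t x) := by funext x; ring
      rw [this]
      have : linf (fun x => -(ρ s x - ρ t x)) = linf (fun x => ρ s x - ρ t x) := by
        unfold linf; congr 1; funext x; rw [abs_neg]
      rw [this]; exact key
    have t1 := linf_triangle hMs hMt
    have t2 := linf_triangle hMt hMs
    rw [abs_lt]; constructor <;> [linarith; linarith]
  obtain ⟨C, hC⟩ := isCompact_Icc.exists_bound_of_continuousOn hco
  exact ⟨C, fun t ht => (le_abs_self _).trans ((Real.norm_eq_abs _) ▸ hC t ht)⟩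

lemma normTg_pointwise {d : ℕ} {T γ C2 : ℝ} {ρ : ℝ → Rd d → ℝ} {C : ℝ}
    (hC : ∀ t ∈ Icc (0:ℝ) T, linf (ρ t) ≤ C) {s : ℝ} (hs : s ∈ Icc (0:ℝ) T) :
    Real.exp (-(γ * C2 * s)) * linf (ρ s) ≤ normTg T γ C2 ρ := by
  have hb : BddAbove (Set.range fun t : Icc (0:ℝ) T =>
      Real.exp (-(γ * C2 * t.1)) * linf (ρ t.1)) := by
    refine ⟨Real.exp (|γ * C2| * T) * max C 0, ?_⟩
    rintro _ ⟨t, rfl⟩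
    have h1 : Real.exp (-(γ * C2 * t.1)) ≤ Real.exp (|γ * C2| * T) := by
      apply Real.exp_le_exp.2
      have h2 : |γ * C2 * t.1| ≤ |γ * C2| * T := by
        rw [abs_mul]
        have := t.2.1; have := t.2.2
        have : |t.1| ≤ T := by rw [abs_of_nonneg t.2.1]; exact t.2.2
        exact mul_le_mul_of_nonneg_left this (abs_nonneg _) |>.trans_eq rfl
      linarith [neg_abs_le (γ * C2 * t.1)]
    have h3 : linf (ρ t.1) ≤ max C 0 := le_max_of_le_left (hC t.1 t.2)
    exact mul_le_mul h1 h3 (linf_nonneg' _) (Real.exp_nonneg _)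
  exact le_ciSup hb (⟨s, hs⟩ : Icc (0:ℝ) T)

/-- Pointwise bound on elements of the ball. -/
lemma memB_pointwise {d : ℕ} {T γ C2 r : ℝ} {ρ : ℝ → Rd d → ℝ}
    (hρ : memB T γ C2 r ρ) {s : ℝ} (hs : s ∈ Icc (0:ℝ) T) (x : Rd d) :
    |ρ s x| ≤ Real.exp (γ * C2 * s) * r := by
  obtain ⟨hcont, hmem, _, hnorm⟩ := hρ
  obtain ⟨C, hC⟩ := linf_family_bounded hcont hmem
  have h1 := (normTg_pointwise hC hs).trans hnorm
  obtain ⟨_, M, hM⟩ := hmem s hs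
  have h2 : |ρ s x| ≤ linf (ρ s) := abs_le_linf' hM x
  have h3 : Real.exp (-(γ * C2 * s)) * linf (ρ s) ≤ r := h1
  have h4 : linf (ρ s) ≤ Real.exp (γ * C2 * s) * r := by
    have hpos : 0 < Real.exp (-(γ * C2 * s)) := Real.exp_pos _
    have := mul_le_mul_of_nonneg_left h3 (Real.exp_nonneg (γ * C2 * s))
    rw [← mul_assoc, ← Real.exp_add] at this
    simpa using this
  linarith

/-- Pointwise bound on the difference in terms of the weighted norm. -/
lemma memB_diff_pointwise {d : ℕ} {T γ C2 r : ℝ} {ρ ψ : ℝ → Rd d → ℝ}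
    (hρ : memB T γ C2 r ρ) (hψ : memB T γ C2 r ψ) {s : ℝ} (hs : s ∈ Icc (0:ℝ) T) (x : Rd d) :
    |ρ s x - ψ s x| ≤ Real.exp (γ * C2 * s) * normTg T γ C2 (fun t x => ρ t x - ψ t x) := by
  obtain ⟨hcρ, hmρ, _, _⟩ := hρ
  obtain ⟨hcψ, hmψ, _, _⟩ := hψ
  obtain ⟨Cρ, hCρ⟩ := linf_family_bounded hcρ hmρ
  obtain ⟨Cψ, hCψ⟩ := linf_family_bounded hcψ hmψ
  have hC : ∀ t ∈ Icc (0:ℝ) T, linf (fun x => ρ t x - ψ t x) ≤ Cρ + Cψ := by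
    intro t ht
    apply linf_le'
    intro y
    obtain ⟨_, Mρ, hMρ⟩ := hmρ t ht
    obtain ⟨_, Mψ, hMψ⟩ := hmψ t ht
    calc |ρ t y - ψ t y| ≤ |ρ t y| + |ψ t y| := abs_sub _ _
      _ ≤ linf (ρ t) + linf (ψ t) := add_le_add (abs_le_linf' hMρ y) (abs_le_linf' hMψ y)
      _ ≤ Cρ + Cψ := add_le_add (hCρ t ht) (hCψ t ht)
  have h1 := normTg_pointwise (γ := γ) (C2 := C2) (ρ := fun t x => ρ t x - ψ t x) hC hs
  obtain ⟨_, Mρ, hMρ⟩ := hmρ s hs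
  obtain ⟨_, Mψ, hMψ⟩ := hmψ s hs
  have h2 : |ρ s x - ψ s x| ≤ linf (fun x => ρ s x - ψ s x) :=
    abs_le_linf' (M := Mρ + Mψ)
      (fun y => (abs_sub _ _).trans (add_le_add (hMρ y) (hMψ y))) x
  have h4 : linf (fun x => ρ s x - ψ s x)
      ≤ Real.exp (γ * C2 * s) * normTg T γ C2 (fun t x => ρ t x - ψ t x) := by
    have := mul_le_mul_of_nonneg_left h1 (Real.exp_nonneg (γ * C2 * s))
    rw [← mul_assoc, ← Real.exp_add] at this
    simpa using this
  linarith

section ConvAux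
variable {d : ℕ}

lemma conv_integrable {φ : Rd d → ℝ} (hφ : Integrable φ)
    {a : Rd d → ℝ} (ha : Measurable a) {M : ℝ} (haM : ∀ u, |a u| ≤ M) (w : Rd d) :
    Integrable (fun u => φ (w - u) * a u) := by
  have h := (hφ.comp_sub_left w).bdd_mul (c := M) ha.aestronglyMeasurable
    (Filter.Eventually.of_forall fun u => by simpa [Real.norm_eq_abs] using haM u)
  simpa [mul_comm] using h

lemma conv_nonneg {φ : Rd d → ℝ} (hφnn : ∀ u, 0 ≤ φ u)
    {a : Rd d → ℝ} (hann : ∀ u, 0 ≤ a u) (w : Rd d) :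
    0 ≤ ∫ u, φ (w - u) * a u :=
  integral_nonneg fun u => mul_nonneg (hφnn _) (hann u)

lemma conv_diff {φ : Rd d → ℝ} (hφ : Integrable φ) (hφnn : ∀ u, 0 ≤ φ u)
    {Φ : ℝ} (hφval : (∫ u, φ u) = Φ)
    {a b : Rd d → ℝ} (ha : Measurable a) (hb : Measurable b)
    {Ma Mb δ : ℝ} (haM : ∀ u, |a u| ≤ Ma) (hbM : ∀ u, |b u| ≤ Mb)
    (hab : ∀ u, |a u - b u| ≤ δ) (w : Rd d) :
    |(∫ u, φ (w - u) * a u) - ∫ u, φ (w - u) * b u| ≤ Φ * δ := by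
  rw [← integral_sub (conv_integrable hφ ha haM w) (conv_integrable hφ hb hbM w)]
  have hg : Integrable (fun u => φ (w - u) * δ) := (hφ.comp_sub_left w).mul_const δ
  have hpt : ∀ u, ‖φ (w - u) * a u - φ (w - u) * b u‖ ≤ φ (w - u) * δ := by
    intro u
    rw [Real.norm_eq_abs, ← mul_sub, abs_mul, abs_of_nonneg (hφnn _)]
    exact mul_le_mul_of_nonneg_left (hab u) (hφnn _)
  calc |∫ u, (φ (w - u) * a u - φ (w - u) * b u)|
      ≤ ∫ u, φ (w - u) * δ := by
        simpa [Real.norm_eq_abs] using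
          norm_integral_le_of_norm_le hg (Filter.Eventually.of_forall hpt)
    _ = (∫ u, φ (w - u)) * δ := integral_mul_const _ _
    _ = Φ * δ := by rw [integral_sub_left_eq_self φ volume w, hφval]

lemma conv_measurable {φ : Rd d → ℝ} (hφm : Measurable φ)
    {a : Rd d → ℝ} (ha : Measurable a) :
    StronglyMeasurable (fun z : Rd d => ∫ u, φ (z - u) * a u) := by
  have h : StronglyMeasurable (fun q : Rd d × Rd d => φ (q.1 - q.2) * a q.2) :=
    ((hφm.comp (measurable_fst.sub measurable_snd)).mul
      (ha.comp measurable_snd)).stronglyMeasurable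
  exact h.integral_prod_right'

end ConvAux

section AlgAux

lemma alg2 {E E' p p' M δ K : ℝ} (hE0 : 0 ≤ E) (hE1 : E ≤ 1) (hE'0 : 0 ≤ E') (hE'1 : E' ≤ 1)
    (hEE : |E - E'| ≤ K) (hp : 0 ≤ p) (hpM : p ≤ M) (hp' : 0 ≤ p') (hp'M : p' ≤ M)
    (hpd : |p - p'| ≤ δ) :
    |E * p - E' * p'| ≤ K * M + δ := by
  have key : E * p - E' * p' = (E - E') * p' + E * (p - p') := by ring
  rw [key]
  have a1 : |(E - E') * p'| ≤ K * M := by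
    rw [abs_mul, abs_of_nonneg hp']
    exact mul_le_mul hEE hp'M hp' ((abs_nonneg _).trans hEE)
  have a2 : |E * (p - p')| ≤ δ := by
    rw [abs_mul, abs_of_nonneg hE0]
    nlinarith [abs_nonneg (p - p')]
  calc |(E - E') * p' + E * (p - p')| ≤ |(E - E') * p'| + |E * (p - p')| := abs_add_le _ _
    _ ≤ K * M + δ := add_le_add a1 a2

lemma alg3 {E E' p q p' q' M δ K : ℝ} (hE0 : 0 ≤ E) (hE1 : E ≤ 1)
    (hE'0 : 0 ≤ E') (hE'1 : E' ≤ 1) (hEE : |E - E'| ≤ K)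
    (hp : 0 ≤ p) (hpM : p ≤ M) (hq : 0 ≤ q) (hqM : q ≤ M)
    (hp' : 0 ≤ p') (hp'M : p' ≤ M) (hq' : 0 ≤ q') (hq'M : q' ≤ M)
    (hpd : |p - p'| ≤ δ) (hqd : |q - q'| ≤ δ) :
    |E * p * q - E' * p' * q'| ≤ K * M ^ 2 + 2 * M * δ := by
  have key : E * p * q - E' * p' * q'
      = (E - E') * (p' * q') + E * ((p - p') * q) + E * (p' * (q - q')) := by ring
  rw [key]
  have hK0 : 0 ≤ K := (abs_nonneg _).trans hEE
  have a1 : |(E - E') * (p' * q')| ≤ K * M ^ 2 := by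
    rw [abs_mul]
    have h1 : |p' * q'| ≤ M ^ 2 := by
      rw [abs_mul, abs_of_nonneg hp', abs_of_nonneg hq']
      nlinarith
    exact mul_le_mul hEE h1 (abs_nonneg _) hK0
  have hδ0 : 0 ≤ δ := (abs_nonneg _).trans hpd
  have a2 : |E * ((p - p') * q)| ≤ M * δ := by
    rw [abs_mul, abs_mul, abs_of_nonneg hE0, abs_of_nonneg hq]
    have h2 : |p - p'| * q ≤ δ * M := mul_le_mul hpd hqM hq hδ0
    nlinarith [mul_nonneg (abs_nonneg (p - p')) hq]
  have a3 : |E * (p' * (q - q'))| ≤ M * δ := by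
    rw [abs_mul, abs_mul, abs_of_nonneg hE0, abs_of_nonneg hp']
    have h2 : p' * |q - q'| ≤ M * δ := mul_le_mul hp'M hqd (abs_nonneg _) ((hp.trans hpM))
    nlinarith [mul_nonneg hp' (abs_nonneg (q - q'))]
  calc |(E - E') * (p' * q') + E * ((p - p') * q) + E * (p' * (q - q'))|
      ≤ |(E - E') * (p' * q') + E * ((p - p') * q)| + |E * (p' * (q - q'))| := abs_add_le _ _
    _ ≤ |(E - E') * (p' * q')| + |E * ((p - p') * q)| + |E * (p' * (q - q'))| :=
        add_le_add_left (abs_add_le _ _) _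
    _ ≤ K * M ^ 2 + M * δ + M * δ := by linarith
    _ = K * M ^ 2 + 2 * M * δ := by ring

end AlgAux

lemma term1_diff {d : ℕ}
    (c₁ : Rd d → Rd d → Rd d → ℝ) (C1 : ℝ)
    (hc₁nn : ∀ x y z, 0 ≤ c₁ x y z)
    (hc₁int₁₂ : ∀ z, Integrable fun p : Rd d × Rd d => c₁ p.1 p.2 z)
    (hc₁val₁₂ : ∀ z, (∫ x, ∫ y, c₁ x y z) = C1)
    (φ₁ : Rd d → ℝ) (Φ₁ : ℝ) (hφ₁nn : ∀ u, 0 ≤ φ₁ u)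
    (hφ₁int : Integrable φ₁) (hφ₁val : (∫ u, φ₁ u) = Φ₁)
    (a b : Rd d → ℝ) (ha : Measurable a) (hb : Measurable b)
    (hna : ∀ y, 0 ≤ a y) (hnb : ∀ y, 0 ≤ b y)
    (M δ : ℝ) (haM : ∀ y, a y ≤ M) (hbM : ∀ y, b y ≤ M)
    (hab : ∀ y, |a y - b y| ≤ δ) (x : Rd d) :
    |(∫ y, ∫ z, c₁ y z x * Real.exp (-∫ u, φ₁ (x - u) * a u) * a y * a z)
      - ∫ y, ∫ z, c₁ y z x * Real.exp (-∫ u, φ₁ (x - u) * b u) * b y * b z|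
      ≤ C1 * (Φ₁ * δ * M ^ 2 + 2 * M * δ) := by
  have haM' : ∀ y, |a y| ≤ M := fun y => by rw [abs_of_nonneg (hna y)]; exact haM y
  have hbM' : ∀ y, |b y| ≤ M := fun y => by rw [abs_of_nonneg (hnb y)]; exact hbM y
  have hM0 : 0 ≤ M := (hna x).trans (haM x)
  set Ea := Real.exp (-∫ u, φ₁ (x - u) * a u) with hEa
  set Eb := Real.exp (-∫ u, φ₁ (x - u) * b u) with hEb
  have hIa0 : 0 ≤ ∫ u, φ₁ (x - u) * a u := conv_nonneg hφ₁nn hna x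
  have hIb0 : 0 ≤ ∫ u, φ₁ (x - u) * b u := conv_nonneg hφ₁nn hnb x
  have hEa0 : 0 ≤ Ea := Real.exp_nonneg _
  have hEb0 : 0 ≤ Eb := Real.exp_nonneg _
  have hEa1 : Ea ≤ 1 := Real.exp_le_one_iff.2 (neg_nonpos.2 hIa0)
  have hEb1 : Eb ≤ 1 := Real.exp_le_one_iff.2 (neg_nonpos.2 hIb0)
  have hEE : |Ea - Eb| ≤ Φ₁ * δ :=
    (exp_diff_le hIa0 hIb0).trans (conv_diff hφ₁int hφ₁nn hφ₁val ha hb haM' hbM' hab x)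
  have hIa : Integrable (fun p : Rd d × Rd d => c₁ p.1 p.2 x * Ea * a p.1 * a p.2)
      (volume.prod volume) := by
    have hbd : ∀ p : Rd d × Rd d, ‖Ea * a p.1 * a p.2‖ ≤ M * M := by
      intro p
      rw [Real.norm_eq_abs, abs_mul, abs_mul, abs_of_nonneg hEa0,
        abs_of_nonneg (hna _), abs_of_nonneg (hna _)]
      nlinarith [hna p.1, haM p.1, hna p.2, haM p.2,
        mul_le_mul (haM p.1) (haM p.2) (hna p.2) hM0, mul_nonneg (hna p.1) (hna p.2)]
    have hmeas : AEStronglyMeasurable (fun p : Rd d × Rd d => Ea * a p.1 * a p.2)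
        (volume.prod volume) :=
      ((measurable_const.mul (ha.comp measurable_fst)).mul
        (ha.comp measurable_snd)).aestronglyMeasurable
    have h := (hc₁int₁₂ x).bdd_mul hmeas (Filter.Eventually.of_forall hbd)
    have heq : (fun p : Rd d × Rd d => c₁ p.1 p.2 x * Ea * a p.1 * a p.2)
        = fun p => (Ea * a p.1 * a p.2) * c₁ p.1 p.2 x := by funext p; ring
    rw [heq]; exact h
  have hIb : Integrable (fun p : Rd d × Rd d => c₁ p.1 p.2 x * Eb * b p.1 * b p.2)
      (volume.prod volume) := by
    have hbd : ∀ p : Rd d × Rd d, ‖Eb * b p.1 * b p.2‖ ≤ M * M := by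
      intro p
      rw [Real.norm_eq_abs, abs_mul, abs_mul, abs_of_nonneg hEb0,
        abs_of_nonneg (hnb _), abs_of_nonneg (hnb _)]
      nlinarith [hnb p.1, hbM p.1, hnb p.2, hbM p.2,
        mul_le_mul (hbM p.1) (hbM p.2) (hnb p.2) hM0, mul_nonneg (hnb p.1) (hnb p.2)]
    have hmeas : AEStronglyMeasurable (fun p : Rd d × Rd d => Eb * b p.1 * b p.2)
        (volume.prod volume) :=
      ((measurable_const.mul (hb.comp measurable_fst)).mul
        (hb.comp measurable_snd)).aestronglyMeasurable
    have h := (hc₁int₁₂ x).bdd_mul hmeas (Filter.Eventually.of_forall hbd)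
    have heq : (fun p : Rd d × Rd d => c₁ p.1 p.2 x * Eb * b p.1 * b p.2)
        = fun p => (Eb * b p.1 * b p.2) * c₁ p.1 p.2 x := by funext p; ring
    rw [heq]; exact h
  rw [integral_integral hIa, integral_integral hIb, ← integral_sub hIa hIb]
  have hg : Integrable (fun p : Rd d × Rd d =>
      c₁ p.1 p.2 x * (Φ₁ * δ * M ^ 2 + 2 * M * δ)) (volume.prod volume) :=
    (hc₁int₁₂ x).mul_const _
  have hpt : ∀ p : Rd d × Rd d,
      ‖c₁ p.1 p.2 x * Ea * a p.1 * a p.2 - c₁ p.1 p.2 x * Eb * b p.1 * b p.2‖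
        ≤ c₁ p.1 p.2 x * (Φ₁ * δ * M ^ 2 + 2 * M * δ) := by
    intro p
    have h := alg3 hEa0 hEa1 hEb0 hEb1 hEE (hna p.1) (haM p.1) (hna p.2) (haM p.2)
      (hnb p.1) (hbM p.1) (hnb p.2) (hbM p.2) (hab p.1) (hab p.2)
    have heq : c₁ p.1 p.2 x * Ea * a p.1 * a p.2 - c₁ p.1 p.2 x * Eb * b p.1 * b p.2
        = c₁ p.1 p.2 x * (Ea * a p.1 * a p.2 - Eb * b p.1 * b p.2) := by ring
    rw [Real.norm_eq_abs, heq, abs_mul, abs_of_nonneg (hc₁nn _ _ _)]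
    exact mul_le_mul_of_nonneg_left h (hc₁nn _ _ _)
  calc |∫ p : Rd d × Rd d, (c₁ p.1 p.2 x * Ea * a p.1 * a p.2
          - c₁ p.1 p.2 x * Eb * b p.1 * b p.2) ∂(volume.prod volume)|
      ≤ ∫ p : Rd d × Rd d, c₁ p.1 p.2 x * (Φ₁ * δ * M ^ 2 + 2 * M * δ)
          ∂(volume.prod volume) := by
        simpa [Real.norm_eq_abs] using
          norm_integral_le_of_norm_le hg (Filter.Eventually.of_forall hpt)
    _ = (∫ p : Rd d × Rd d, c₁ p.1 p.2 x ∂(volume.prod volume))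
          * (Φ₁ * δ * M ^ 2 + 2 * M * δ) := integral_mul_const _ _
    _ = C1 * (Φ₁ * δ * M ^ 2 + 2 * M * δ) := by
        have hval : (∫ p : Rd d × Rd d, c₁ p.1 p.2 x ∂(volume.prod volume)) = C1 := by
          rw [← hc₁val₁₂ x]; exact (integral_integral (f := fun y z => c₁ y z x) (hc₁int₁₂ x)).symm
        rw [hval]

lemma term2_diff {d : ℕ}
    (c₁ : Rd d → Rd d → Rd d → ℝ) (C1 : ℝ)
    (hc₁nn : ∀ x y z, 0 ≤ c₁ x y z)
    (hc₁int₁₃ : ∀ y, Integrable fun p : Rd d × Rd d => c₁ p.1 y p.2)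
    (hc₁int₂₃ : ∀ x, Integrable fun p : Rd d × Rd d => c₁ x p.1 p.2)
    (hc₁val₁₃ : ∀ y, (∫ x, ∫ z, c₁ x y z) = C1)
    (hc₁val₂₃ : ∀ x, (∫ y, ∫ z, c₁ x y z) = C1)
    (φ₁ : Rd d → ℝ) (Φ₁ : ℝ) (hφ₁meas : Measurable φ₁) (hφ₁nn : ∀ u, 0 ≤ φ₁ u)
    (hφ₁int : Integrable φ₁) (hφ₁val : (∫ u, φ₁ u) = Φ₁)
    (a b : Rd d → ℝ) (ha : Measurable a) (hb : Measurable b)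
    (hna : ∀ y, 0 ≤ a y) (hnb : ∀ y, 0 ≤ b y)
    (M δ : ℝ) (haM : ∀ y, a y ≤ M) (hbM : ∀ y, b y ≤ M)
    (hab : ∀ y, |a y - b y| ≤ δ) (x : Rd d) :
    |(∫ y, ∫ z, (c₁ x y z + c₁ y x z) * (1 - Real.exp (-∫ u, φ₁ (z - u) * a u)) * a x * a y)
      - ∫ y, ∫ z, (c₁ x y z + c₁ y x z) * (1 - Real.exp (-∫ u, φ₁ (z - u) * b u)) * b x * b y|
      ≤ (C1 + C1) * (Φ₁ * δ * M ^ 2 + 2 * M * δ) := by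
  have haM' : ∀ y, |a y| ≤ M := fun y => by rw [abs_of_nonneg (hna y)]; exact haM y
  have hbM' : ∀ y, |b y| ≤ M := fun y => by rw [abs_of_nonneg (hnb y)]; exact hbM y
  have hM0 : 0 ≤ M := (hna x).trans (haM x)
  have hknn : ∀ p : Rd d × Rd d, 0 ≤ c₁ x p.1 p.2 + c₁ p.1 x p.2 :=
    fun p => add_nonneg (hc₁nn _ _ _) (hc₁nn _ _ _)
  have hk : Integrable (fun p : Rd d × Rd d => c₁ x p.1 p.2 + c₁ p.1 x p.2)
      (volume.prod volume) := (hc₁int₂₃ x).add (hc₁int₁₃ x)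
  -- facts about the exponentials
  have hIa0 : ∀ z, 0 ≤ ∫ u, φ₁ (z - u) * a u := fun z => conv_nonneg hφ₁nn hna z
  have hIb0 : ∀ z, 0 ≤ ∫ u, φ₁ (z - u) * b u := fun z => conv_nonneg hφ₁nn hnb z
  have hEa0 : ∀ z, 0 ≤ 1 - Real.exp (-∫ u, φ₁ (z - u) * a u) := fun z => by
    have : Real.exp (-∫ u, φ₁ (z - u) * a u) ≤ 1 :=
      Real.exp_le_one_iff.2 (neg_nonpos.2 (hIa0 z))
    linarith
  have hEb0 : ∀ z, 0 ≤ 1 - Real.exp (-∫ u, φ₁ (z - u) * b u) := fun z => by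
    have : Real.exp (-∫ u, φ₁ (z - u) * b u) ≤ 1 :=
      Real.exp_le_one_iff.2 (neg_nonpos.2 (hIb0 z))
    linarith
  have hEa1 : ∀ z, 1 - Real.exp (-∫ u, φ₁ (z - u) * a u) ≤ 1 := fun z => by
    have := Real.exp_nonneg (-∫ u, φ₁ (z - u) * a u); linarith
  have hEb1 : ∀ z, 1 - Real.exp (-∫ u, φ₁ (z - u) * b u) ≤ 1 := fun z => by
    have := Real.exp_nonneg (-∫ u, φ₁ (z - u) * b u); linarith
  have hEE : ∀ z, |(1 - Real.exp (-∫ u, φ₁ (z - u) * a u))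
      - (1 - Real.exp (-∫ u, φ₁ (z - u) * b u))| ≤ Φ₁ * δ := by
    intro z
    have h1 : (1 - Real.exp (-∫ u, φ₁ (z - u) * a u))
        - (1 - Real.exp (-∫ u, φ₁ (z - u) * b u))
        = -(Real.exp (-∫ u, φ₁ (z - u) * a u) - Real.exp (-∫ u, φ₁ (z - u) * b u)) := by ring
    rw [h1, abs_neg]
    exact (exp_diff_le (hIa0 z) (hIb0 z)).trans
      (conv_diff hφ₁int hφ₁nn hφ₁val ha hb haM' hbM' hab z)
  -- measurability of the exponential factor
  have hSMa : StronglyMeasurable fun z : Rd d => Real.exp (-∫ u, φ₁ (z - u) * a u) :=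
    Real.continuous_exp.comp_stronglyMeasurable (conv_measurable hφ₁meas ha).neg
  have hSMb : StronglyMeasurable fun z : Rd d => Real.exp (-∫ u, φ₁ (z - u) * b u) :=
    Real.continuous_exp.comp_stronglyMeasurable (conv_measurable hφ₁meas hb).neg
  -- integrability on the product space
  have hIa : Integrable (fun p : Rd d × Rd d => (c₁ x p.1 p.2 + c₁ p.1 x p.2)
      * (1 - Real.exp (-∫ u, φ₁ (p.2 - u) * a u)) * a x * a p.1)
      (volume.prod volume) := by
    have hbd : ∀ p : Rd d × Rd d,
        ‖(1 - Real.exp (-∫ u, φ₁ (p.2 - u) * a u)) * a x * a p.1‖ ≤ M * M := by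
      intro p
      rw [Real.norm_eq_abs, abs_mul, abs_mul, abs_of_nonneg (hEa0 p.2),
        abs_of_nonneg (hna _), abs_of_nonneg (hna _)]
      nlinarith [hna x, haM x, hna p.1, haM p.1, hEa0 p.2, hEa1 p.2,
        mul_le_mul (haM x) (haM p.1) (hna p.1) hM0, mul_nonneg (hna x) (hna p.1)]
    have hmeas : AEStronglyMeasurable (fun p : Rd d × Rd d =>
        (1 - Real.exp (-∫ u, φ₁ (p.2 - u) * a u)) * a x * a p.1) (volume.prod volume) :=
      (((stronglyMeasurable_const.sub (hSMa.comp_measurable measurable_snd)).mul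
        stronglyMeasurable_const).mul
        ((ha.comp measurable_fst).stronglyMeasurable)).aestronglyMeasurable
    have h := hk.bdd_mul hmeas (Filter.Eventually.of_forall hbd)
    have heq : (fun p : Rd d × Rd d => (c₁ x p.1 p.2 + c₁ p.1 x p.2)
        * (1 - Real.exp (-∫ u, φ₁ (p.2 - u) * a u)) * a x * a p.1)
        = fun p => ((1 - Real.exp (-∫ u, φ₁ (p.2 - u) * a u)) * a x * a p.1)
            * (c₁ x p.1 p.2 + c₁ p.1 x p.2) := by funext p; ring
    rw [heq]; exact h
  have hIb : Integrable (fun p : Rd d × Rd d => (c₁ x p.1 p.2 + c₁ p.1 x p.2)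
      * (1 - Real.exp (-∫ u, φ₁ (p.2 - u) * b u)) * b x * b p.1)
      (volume.prod volume) := by
    have hbd : ∀ p : Rd d × Rd d,
        ‖(1 - Real.exp (-∫ u, φ₁ (p.2 - u) * b u)) * b x * b p.1‖ ≤ M * M := by
      intro p
      rw [Real.norm_eq_abs, abs_mul, abs_mul, abs_of_nonneg (hEb0 p.2),
        abs_of_nonneg (hnb _), abs_of_nonneg (hnb _)]
      nlinarith [hnb x, hbM x, hnb p.1, hbM p.1, hEb0 p.2, hEb1 p.2,
        mul_le_mul (hbM x) (hbM p.1) (hnb p.1) hM0, mul_nonneg (hnb x) (hnb p.1)]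
    have hmeas : AEStronglyMeasurable (fun p : Rd d × Rd d =>
        (1 - Real.exp (-∫ u, φ₁ (p.2 - u) * b u)) * b x * b p.1) (volume.prod volume) :=
      (((stronglyMeasurable_const.sub (hSMb.comp_measurable measurable_snd)).mul
        stronglyMeasurable_const).mul
        ((hb.comp measurable_fst).stronglyMeasurable)).aestronglyMeasurable
    have h := hk.bdd_mul hmeas (Filter.Eventually.of_forall hbd)
    have heq : (fun p : Rd d × Rd d => (c₁ x p.1 p.2 + c₁ p.1 x p.2)
        * (1 - Real.exp (-∫ u, φ₁ (p.2 - u) * b u)) * b x * b p.1)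
        = fun p => ((1 - Real.exp (-∫ u, φ₁ (p.2 - u) * b u)) * b x * b p.1)
            * (c₁ x p.1 p.2 + c₁ p.1 x p.2) := by funext p; ring
    rw [heq]; exact h
  rw [integral_integral hIa, integral_integral hIb, ← integral_sub hIa hIb]
  have hg : Integrable (fun p : Rd d × Rd d =>
      (c₁ x p.1 p.2 + c₁ p.1 x p.2) * (Φ₁ * δ * M ^ 2 + 2 * M * δ)) (volume.prod volume) :=
    hk.mul_const _
  have hpt : ∀ p : Rd d × Rd d,
      ‖(c₁ x p.1 p.2 + c₁ p.1 x p.2) * (1 - Real.exp (-∫ u, φ₁ (p.2 - u) * a u)) * a x * a p.1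
        - (c₁ x p.1 p.2 + c₁ p.1 x p.2)
            * (1 - Real.exp (-∫ u, φ₁ (p.2 - u) * b u)) * b x * b p.1‖
        ≤ (c₁ x p.1 p.2 + c₁ p.1 x p.2) * (Φ₁ * δ * M ^ 2 + 2 * M * δ) := by
    intro p
    have h := alg3 (hEa0 p.2) (hEa1 p.2) (hEb0 p.2) (hEb1 p.2) (hEE p.2)
      (hna x) (haM x) (hna p.1) (haM p.1) (hnb x) (hbM x) (hnb p.1) (hbM p.1)
      (hab x) (hab p.1)
    have heq : (c₁ x p.1 p.2 + c₁ p.1 x p.2)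
          * (1 - Real.exp (-∫ u, φ₁ (p.2 - u) * a u)) * a x * a p.1
        - (c₁ x p.1 p.2 + c₁ p.1 x p.2)
            * (1 - Real.exp (-∫ u, φ₁ (p.2 - u) * b u)) * b x * b p.1
        = (c₁ x p.1 p.2 + c₁ p.1 x p.2)
            * ((1 - Real.exp (-∫ u, φ₁ (p.2 - u) * a u)) * a x * a p.1
              - (1 - Real.exp (-∫ u, φ₁ (p.2 - u) * b u)) * b x * b p.1) := by ring
    rw [Real.norm_eq_abs, heq, abs_mul, abs_of_nonneg (hknn p)]
    exact mul_le_mul_of_nonneg_left h (hknn p)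
  calc |∫ p : Rd d × Rd d, ((c₁ x p.1 p.2 + c₁ p.1 x p.2)
          * (1 - Real.exp (-∫ u, φ₁ (p.2 - u) * a u)) * a x * a p.1
        - (c₁ x p.1 p.2 + c₁ p.1 x p.2)
            * (1 - Real.exp (-∫ u, φ₁ (p.2 - u) * b u)) * b x * b p.1)
          ∂(volume.prod volume)|
      ≤ ∫ p : Rd d × Rd d, (c₁ x p.1 p.2 + c₁ p.1 x p.2) * (Φ₁ * δ * M ^ 2 + 2 * M * δ)
          ∂(volume.prod volume) := by
        simpa [Real.norm_eq_abs] using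
          norm_integral_le_of_norm_le hg (Filter.Eventually.of_forall hpt)
    _ = (∫ p : Rd d × Rd d, (c₁ x p.1 p.2 + c₁ p.1 x p.2) ∂(volume.prod volume))
          * (Φ₁ * δ * M ^ 2 + 2 * M * δ) := integral_mul_const _ _
    _ = (C1 + C1) * (Φ₁ * δ * M ^ 2 + 2 * M * δ) := by
        have hv1 : (∫ p : Rd d × Rd d, c₁ x p.1 p.2 ∂(volume.prod volume)) = C1 := by
          rw [← hc₁val₂₃ x]
          exact (integral_integral (f := fun y z => c₁ x y z) (hc₁int₂₃ x)).symm
        have hv2 : (∫ p : Rd d × Rd d, c₁ p.1 x p.2 ∂(volume.prod volume)) = C1 := by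
          rw [← hc₁val₁₃ x]
          exact (integral_integral (f := fun y z => c₁ y x z) (hc₁int₁₃ x)).symm
        have hadd := integral_add (μ := volume.prod volume) (hc₁int₂₃ x) (hc₁int₁₃ x)
        rw [hadd, hv1, hv2]

lemma term3_diff {d : ℕ}
    (c₂ : Rd d → Rd d → ℝ) (C2 : ℝ)
    (hc₂nn : ∀ x y, 0 ≤ c₂ x y)
    (hc₂int₁ : ∀ y, Integrable fun x => c₂ x y)
    (hc₂val₁ : ∀ y, (∫ x, c₂ x y) = C2)
    (φ₂ : Rd d → ℝ) (Φ₂ : ℝ) (hφ₂nn : ∀ u, 0 ≤ φ₂ u)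
    (hφ₂int : Integrable φ₂) (hφ₂val : (∫ u, φ₂ u) = Φ₂)
    (a b : Rd d → ℝ) (ha : Measurable a) (hb : Measurable b)
    (hna : ∀ y, 0 ≤ a y) (hnb : ∀ y, 0 ≤ b y)
    (M δ : ℝ) (haM : ∀ y, a y ≤ M) (hbM : ∀ y, b y ≤ M)
    (hab : ∀ y, |a y - b y| ≤ δ) (x : Rd d) :
    |(∫ y, c₂ y x * Real.exp (-∫ u, φ₂ (x - u) * a u) * a y)
      - ∫ y, c₂ y x * Real.exp (-∫ u, φ₂ (x - u) * b u) * b y|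
      ≤ C2 * (Φ₂ * δ * M + δ) := by
  have haM' : ∀ y, |a y| ≤ M := fun y => by rw [abs_of_nonneg (hna y)]; exact haM y
  have hbM' : ∀ y, |b y| ≤ M := fun y => by rw [abs_of_nonneg (hnb y)]; exact hbM y
  have hM0 : 0 ≤ M := (hna x).trans (haM x)
  set Ea := Real.exp (-∫ u, φ₂ (x - u) * a u) with hEadef
  set Eb := Real.exp (-∫ u, φ₂ (x - u) * b u) with hEbdef
  have hIa0 : 0 ≤ ∫ u, φ₂ (x - u) * a u := conv_nonneg hφ₂nn hna x
  have hIb0 : 0 ≤ ∫ u, φ₂ (x - u) * b u := conv_nonneg hφ₂nn hnb x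
  have hEa0 : 0 ≤ Ea := Real.exp_nonneg _
  have hEb0 : 0 ≤ Eb := Real.exp_nonneg _
  have hEa1 : Ea ≤ 1 := Real.exp_le_one_iff.2 (neg_nonpos.2 hIa0)
  have hEb1 : Eb ≤ 1 := Real.exp_le_one_iff.2 (neg_nonpos.2 hIb0)
  have hEE : |Ea - Eb| ≤ Φ₂ * δ :=
    (exp_diff_le hIa0 hIb0).trans (conv_diff hφ₂int hφ₂nn hφ₂val ha hb haM' hbM' hab x)
  have hIa : Integrable (fun y => c₂ y x * Ea * a y) := by
    have hbd : ∀ y, ‖Ea * a y‖ ≤ M := by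
      intro y
      rw [Real.norm_eq_abs, abs_mul, abs_of_nonneg hEa0, abs_of_nonneg (hna _)]
      nlinarith [hna y, haM y]
    have h := (hc₂int₁ x).bdd_mul
      ((measurable_const.mul ha).aestronglyMeasurable) (Filter.Eventually.of_forall hbd)
    have heq : (fun y => c₂ y x * Ea * a y) = fun y => (Ea * a y) * c₂ y x := by
      funext y; ring
    rw [heq]; exact h
  have hIb : Integrable (fun y => c₂ y x * Eb * b y) := by
    have hbd : ∀ y, ‖Eb * b y‖ ≤ M := by
      intro y
      rw [Real.norm_eq_abs, abs_mul, abs_of_nonneg hEb0, abs_of_nonneg (hnb _)]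
      nlinarith [hnb y, hbM y]
    have h := (hc₂int₁ x).bdd_mul
      ((measurable_const.mul hb).aestronglyMeasurable) (Filter.Eventually.of_forall hbd)
    have heq : (fun y => c₂ y x * Eb * b y) = fun y => (Eb * b y) * c₂ y x := by
      funext y; ring
    rw [heq]; exact h
  rw [← integral_sub hIa hIb]
  have hg : Integrable (fun y => c₂ y x * (Φ₂ * δ * M + δ)) := (hc₂int₁ x).mul_const _
  have hpt : ∀ y, ‖c₂ y x * Ea * a y - c₂ y x * Eb * b y‖ ≤ c₂ y x * (Φ₂ * δ * M + δ) := by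
    intro y
    have h := alg2 hEa0 hEa1 hEb0 hEb1 hEE (hna y) (haM y) (hnb y) (hbM y) (hab y)
    have heq : c₂ y x * Ea * a y - c₂ y x * Eb * b y
        = c₂ y x * (Ea * a y - Eb * b y) := by ring
    rw [Real.norm_eq_abs, heq, abs_mul, abs_of_nonneg (hc₂nn _ _)]
    exact mul_le_mul_of_nonneg_left h (hc₂nn _ _)
  calc |∫ y, (c₂ y x * Ea * a y - c₂ y x * Eb * b y)|
      ≤ ∫ y, c₂ y x * (Φ₂ * δ * M + δ) := by
        simpa [Real.norm_eq_abs] using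
          norm_integral_le_of_norm_le hg (Filter.Eventually.of_forall hpt)
    _ = (∫ y, c₂ y x) * (Φ₂ * δ * M + δ) := integral_mul_const _ _
    _ = C2 * (Φ₂ * δ * M + δ) := by rw [hc₂val₁ x]

lemma term4_diff {d : ℕ}
    (c₂ : Rd d → Rd d → ℝ) (C2 : ℝ)
    (hc₂nn : ∀ x y, 0 ≤ c₂ x y)
    (hc₂int₂ : ∀ x, Integrable fun y => c₂ x y)
    (hc₂val₂ : ∀ x, (∫ y, c₂ x y) = C2)
    (φ₂ : Rd d → ℝ) (Φ₂ : ℝ) (hφ₂meas : Measurable φ₂) (hφ₂nn : ∀ u, 0 ≤ φ₂ u)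
    (hφ₂int : Integrable φ₂) (hφ₂val : (∫ u, φ₂ u) = Φ₂)
    (a b : Rd d → ℝ) (ha : Measurable a) (hb : Measurable b)
    (hna : ∀ y, 0 ≤ a y) (hnb : ∀ y, 0 ≤ b y)
    (M δ : ℝ) (haM : ∀ y, a y ≤ M) (hbM : ∀ y, b y ≤ M)
    (hab : ∀ y, |a y - b y| ≤ δ) (x : Rd d) :
    |(∫ y, c₂ x y * (1 - Real.exp (-∫ u, φ₂ (y - u) * a u)) * a x)
      - ∫ y, c₂ x y * (1 - Real.exp (-∫ u, φ₂ (y - u) * b u)) * b x|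
      ≤ C2 * (Φ₂ * δ * M + δ) := by
  have haM' : ∀ y, |a y| ≤ M := fun y => by rw [abs_of_nonneg (hna y)]; exact haM y
  have hbM' : ∀ y, |b y| ≤ M := fun y => by rw [abs_of_nonneg (hnb y)]; exact hbM y
  have hM0 : 0 ≤ M := (hna x).trans (haM x)
  have hIa0 : ∀ z, 0 ≤ ∫ u, φ₂ (z - u) * a u := fun z => conv_nonneg hφ₂nn hna z
  have hIb0 : ∀ z, 0 ≤ ∫ u, φ₂ (z - u) * b u := fun z => conv_nonneg hφ₂nn hnb z
  have hEa0 : ∀ z, 0 ≤ 1 - Real.exp (-∫ u, φ₂ (z - u) * a u) := fun z => by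
    have : Real.exp (-∫ u, φ₂ (z - u) * a u) ≤ 1 :=
      Real.exp_le_one_iff.2 (neg_nonpos.2 (hIa0 z))
    linarith
  have hEb0 : ∀ z, 0 ≤ 1 - Real.exp (-∫ u, φ₂ (z - u) * b u) := fun z => by
    have : Real.exp (-∫ u, φ₂ (z - u) * b u) ≤ 1 :=
      Real.exp_le_one_iff.2 (neg_nonpos.2 (hIb0 z))
    linarith
  have hEa1 : ∀ z, 1 - Real.exp (-∫ u, φ₂ (z - u) * a u) ≤ 1 := fun z => by
    have := Real.exp_nonneg (-∫ u, φ₂ (z - u) * a u); linarith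
  have hEb1 : ∀ z, 1 - Real.exp (-∫ u, φ₂ (z - u) * b u) ≤ 1 := fun z => by
    have := Real.exp_nonneg (-∫ u, φ₂ (z - u) * b u); linarith
  have hEE : ∀ z, |(1 - Real.exp (-∫ u, φ₂ (z - u) * a u))
      - (1 - Real.exp (-∫ u, φ₂ (z - u) * b u))| ≤ Φ₂ * δ := by
    intro z
    have h1 : (1 - Real.exp (-∫ u, φ₂ (z - u) * a u))
        - (1 - Real.exp (-∫ u, φ₂ (z - u) * b u))
        = -(Real.exp (-∫ u, φ₂ (z - u) * a u) - Real.exp (-∫ u, φ₂ (z - u) * b u)) := by ring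
    rw [h1, abs_neg]
    exact (exp_diff_le (hIa0 z) (hIb0 z)).trans
      (conv_diff hφ₂int hφ₂nn hφ₂val ha hb haM' hbM' hab z)
  have hSMa : StronglyMeasurable fun z : Rd d => Real.exp (-∫ u, φ₂ (z - u) * a u) :=
    Real.continuous_exp.comp_stronglyMeasurable (conv_measurable hφ₂meas ha).neg
  have hSMb : StronglyMeasurable fun z : Rd d => Real.exp (-∫ u, φ₂ (z - u) * b u) :=
    Real.continuous_exp.comp_stronglyMeasurable (conv_measurable hφ₂meas hb).neg
  have hIa : Integrable (fun y => c₂ x y * (1 - Real.exp (-∫ u, φ₂ (y - u) * a u)) * a x) := by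
    have hbd : ∀ y, ‖(1 - Real.exp (-∫ u, φ₂ (y - u) * a u)) * a x‖ ≤ M := by
      intro y
      rw [Real.norm_eq_abs, abs_mul, abs_of_nonneg (hEa0 y), abs_of_nonneg (hna _)]
      nlinarith [hna x, haM x, hEa0 y, hEa1 y]
    have h := (hc₂int₂ x).bdd_mul
      (((stronglyMeasurable_const.sub hSMa).mul
        stronglyMeasurable_const).aestronglyMeasurable) (Filter.Eventually.of_forall hbd)
    have heq : (fun y => c₂ x y * (1 - Real.exp (-∫ u, φ₂ (y - u) * a u)) * a x)
        = fun y => ((1 - Real.exp (-∫ u, φ₂ (y - u) * a u)) * a x) * c₂ x y := by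
      funext y; ring
    rw [heq]; exact h
  have hIb : Integrable (fun y => c₂ x y * (1 - Real.exp (-∫ u, φ₂ (y - u) * b u)) * b x) := by
    have hbd : ∀ y, ‖(1 - Real.exp (-∫ u, φ₂ (y - u) * b u)) * b x‖ ≤ M := by
      intro y
      rw [Real.norm_eq_abs, abs_mul, abs_of_nonneg (hEb0 y), abs_of_nonneg (hnb _)]
      nlinarith [hnb x, hbM x, hEb0 y, hEb1 y]
    have h := (hc₂int₂ x).bdd_mul
      (((stronglyMeasurable_const.sub hSMb).mul
        stronglyMeasurable_const).aestronglyMeasurable) (Filter.Eventually.of_forall hbd)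
    have heq : (fun y => c₂ x y * (1 - Real.exp (-∫ u, φ₂ (y - u) * b u)) * b x)
        = fun y => ((1 - Real.exp (-∫ u, φ₂ (y - u) * b u)) * b x) * c₂ x y := by
      funext y; ring
    rw [heq]; exact h
  rw [← integral_sub hIa hIb]
  have hg : Integrable (fun y => c₂ x y * (Φ₂ * δ * M + δ)) := (hc₂int₂ x).mul_const _
  have hpt : ∀ y, ‖c₂ x y * (1 - Real.exp (-∫ u, φ₂ (y - u) * a u)) * a x
      - c₂ x y * (1 - Real.exp (-∫ u, φ₂ (y - u) * b u)) * b x‖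
      ≤ c₂ x y * (Φ₂ * δ * M + δ) := by
    intro y
    have h := alg2 (hEa0 y) (hEa1 y) (hEb0 y) (hEb1 y) (hEE y)
      (hna x) (haM x) (hnb x) (hbM x) (hab x)
    have heq : c₂ x y * (1 - Real.exp (-∫ u, φ₂ (y - u) * a u)) * a x
        - c₂ x y * (1 - Real.exp (-∫ u, φ₂ (y - u) * b u)) * b x
        = c₂ x y * ((1 - Real.exp (-∫ u, φ₂ (y - u) * a u)) * a x
            - (1 - Real.exp (-∫ u, φ₂ (y - u) * b u)) * b x) := by ring
    rw [Real.norm_eq_abs, heq, abs_mul, abs_of_nonneg (hc₂nn _ _)]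
    exact mul_le_mul_of_nonneg_left h (hc₂nn _ _)
  calc |∫ y, (c₂ x y * (1 - Real.exp (-∫ u, φ₂ (y - u) * a u)) * a x
          - c₂ x y * (1 - Real.exp (-∫ u, φ₂ (y - u) * b u)) * b x)|
      ≤ ∫ y, c₂ x y * (Φ₂ * δ * M + δ) := by
        simpa [Real.norm_eq_abs] using
          norm_integral_le_of_norm_le hg (Filter.Eventually.of_forall hpt)
    _ = (∫ y, c₂ x y) * (Φ₂ * δ * M + δ) := integral_mul_const _ _
    _ = C2 * (Φ₂ * δ * M + δ) := by rw [hc₂val₂ x]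

lemma R2_lip {d : ℕ}
    (c₁ : Rd d → Rd d → Rd d → ℝ) (C1 : ℝ)
    (hc₁nn : ∀ x y z, 0 ≤ c₁ x y z)
    (hc₁int₁₂ : ∀ z, Integrable fun p : Rd d × Rd d => c₁ p.1 p.2 z)
    (hc₁int₁₃ : ∀ y, Integrable fun p : Rd d × Rd d => c₁ p.1 y p.2)
    (hc₁int₂₃ : ∀ x, Integrable fun p : Rd d × Rd d => c₁ x p.1 p.2)
    (hc₁val₁₂ : ∀ z, (∫ x, ∫ y, c₁ x y z) = C1)
    (hc₁val₁₃ : ∀ y, (∫ x, ∫ z, c₁ x y z) = C1)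
    (hc₁val₂₃ : ∀ x, (∫ y, ∫ z, c₁ x y z) = C1)
    (c₂ : Rd d → Rd d → ℝ) (C2 : ℝ)
    (hc₂nn : ∀ x y, 0 ≤ c₂ x y)
    (hc₂int₁ : ∀ y, Integrable fun x => c₂ x y)
    (hc₂int₂ : ∀ x, Integrable fun y => c₂ x y)
    (hc₂val₁ : ∀ y, (∫ x, c₂ x y) = C2)
    (hc₂val₂ : ∀ x, (∫ y, c₂ x y) = C2)
    (φ₁ : Rd d → ℝ) (Φ₁ : ℝ) (hφ₁meas : Measurable φ₁) (hφ₁nn : ∀ u, 0 ≤ φ₁ u)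
    (hφ₁int : Integrable φ₁) (hφ₁val : (∫ u, φ₁ u) = Φ₁)
    (φ₂ : Rd d → ℝ) (Φ₂ : ℝ) (hφ₂meas : Measurable φ₂) (hφ₂nn : ∀ u, 0 ≤ φ₂ u)
    (hφ₂int : Integrable φ₂) (hφ₂val : (∫ u, φ₂ u) = Φ₂)
    (a b : Rd d → ℝ) (ha : Measurable a) (hb : Measurable b)
    (hna : ∀ y, 0 ≤ a y) (hnb : ∀ y, 0 ≤ b y)
    (M δ : ℝ) (haM : ∀ y, a y ≤ M) (hbM : ∀ y, b y ≤ M)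
    (hab : ∀ y, |a y - b y| ≤ δ) (x : Rd d) :
    |R2 c₁ c₂ φ₁ φ₂ a x - R2 c₁ c₂ φ₁ φ₂ b x|
      ≤ 3/2 * C1 * (Φ₁ * δ * M ^ 2 + 2 * M * δ) + 2 * C2 * (Φ₂ * δ * M + δ) := by
  have h1 := term1_diff c₁ C1 hc₁nn hc₁int₁₂ hc₁val₁₂ φ₁ Φ₁ hφ₁nn hφ₁int hφ₁val
    a b ha hb hna hnb M δ haM hbM hab x
  have h2 := term2_diff c₁ C1 hc₁nn hc₁int₁₃ hc₁int₂₃ hc₁val₁₃ hc₁val₂₃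
    φ₁ Φ₁ hφ₁meas hφ₁nn hφ₁int hφ₁val a b ha hb hna hnb M δ haM hbM hab x
  have h3 := term3_diff c₂ C2 hc₂nn hc₂int₁ hc₂val₁ φ₂ Φ₂ hφ₂nn hφ₂int hφ₂val
    a b ha hb hna hnb M δ haM hbM hab x
  have h4 := term4_diff c₂ C2 hc₂nn hc₂int₂ hc₂val₂ φ₂ Φ₂ hφ₂meas hφ₂nn hφ₂int hφ₂val
    a b ha hb hna hnb M δ haM hbM hab x
  unfold R2
  set T1a := ∫ y, ∫ z, c₁ y z x * Real.exp (-∫ u, φ₁ (x - u) * a u) * a y * a z with hT1a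
  set T1b := ∫ y, ∫ z, c₁ y z x * Real.exp (-∫ u, φ₁ (x - u) * b u) * b y * b z with hT1b
  set T2a := ∫ y, ∫ z, (c₁ x y z + c₁ y x z)
      * (1 - Real.exp (-∫ u, φ₁ (z - u) * a u)) * a x * a y with hT2a
  set T2b := ∫ y, ∫ z, (c₁ x y z + c₁ y x z)
      * (1 - Real.exp (-∫ u, φ₁ (z - u) * b u)) * b x * b y with hT2b
  set T3a := ∫ y, c₂ y x * Real.exp (-∫ u, φ₂ (x - u) * a u) * a y with hT3a
  set T3b := ∫ y, c₂ y x * Real.exp (-∫ u, φ₂ (x - u) * b u) * b y with hT3b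
  set T4a := ∫ y, c₂ x y * (1 - Real.exp (-∫ u, φ₂ (y - u) * a u)) * a x with hT4a
  set T4b := ∫ y, c₂ x y * (1 - Real.exp (-∫ u, φ₂ (y - u) * b u)) * b x with hT4b
  have key : 1/2 * T1a + 1/2 * T2a + T3a + T4a - (1/2 * T1b + 1/2 * T2b + T3b + T4b)
      = 1/2 * (T1a - T1b) + 1/2 * (T2a - T2b) + ((T3a - T3b) + (T4a - T4b)) := by ring
  rw [key]
  have habs : |1/2 * (T1a - T1b) + 1/2 * (T2a - T2b) + ((T3a - T3b) + (T4a - T4b))|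
      ≤ 1/2 * |T1a - T1b| + 1/2 * |T2a - T2b| + (|T3a - T3b| + |T4a - T4b|) := by
    calc |1/2 * (T1a - T1b) + 1/2 * (T2a - T2b) + ((T3a - T3b) + (T4a - T4b))|
        ≤ |1/2 * (T1a - T1b) + 1/2 * (T2a - T2b)| + |(T3a - T3b) + (T4a - T4b)| :=
          abs_add_le _ _
      _ ≤ |1/2 * (T1a - T1b)| + |1/2 * (T2a - T2b)| + (|T3a - T3b| + |T4a - T4b|) :=
          add_le_add (abs_add_le _ _) (abs_add_le _ _)
      _ = 1/2 * |T1a - T1b| + 1/2 * |T2a - T2b| + (|T3a - T3b| + |T4a - T4b|) := by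
          have h12 : |(1:ℝ)/2| = 1/2 := by norm_num
          rw [abs_mul, abs_mul, h12]
  refine habs.trans ?_
  nlinarith [h1, h2, h3, h4]

theorem statement7 {d : ℕ} (hd : 1 ≤ d)
    (c₁ : Rd d → Rd d → Rd d → ℝ) (C1 : ℝ)
    (hc₁meas : Measurable fun p : Rd d × Rd d × Rd d => c₁ p.1 p.2.1 p.2.2)
    (hc₁nn : ∀ x y z, 0 ≤ c₁ x y z)
    (hc₁sym : ∀ x y z, c₁ x y z = c₁ y x z)
    (hc₁int₁₂ : ∀ z, Integrable fun p : Rd d × Rd d => c₁ p.1 p.2 z)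
    (hc₁int₁₃ : ∀ y, Integrable fun p : Rd d × Rd d => c₁ p.1 y p.2)
    (hc₁int₂₃ : ∀ x, Integrable fun p : Rd d × Rd d => c₁ x p.1 p.2)
    (hc₁val₁₂ : ∀ z, (∫ x, ∫ y, c₁ x y z) = C1)
    (hc₁val₁₃ : ∀ y, (∫ x, ∫ z, c₁ x y z) = C1)
    (hc₁val₂₃ : ∀ x, (∫ y, ∫ z, c₁ x y z) = C1)
    (c₂ : Rd d → Rd d → ℝ) (C2 : ℝ)
    (hc₂meas : Measurable fun p : Rd d × Rd d => c₂ p.1 p.2)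
    (hc₂nn : ∀ x y, 0 ≤ c₂ x y)
    (hc₂int₁ : ∀ y, Integrable fun x => c₂ x y)
    (hc₂int₂ : ∀ x, Integrable fun y => c₂ x y)
    (hc₂val₁ : ∀ y, (∫ x, c₂ x y) = C2)
    (hc₂val₂ : ∀ x, (∫ y, c₂ x y) = C2)
    (φ₁ : Rd d → ℝ) (Φ₁ : ℝ) (hφ₁meas : Measurable φ₁) (hφ₁nn : ∀ u, 0 ≤ φ₁ u)
    (hφ₁int : Integrable φ₁) (hφ₁val : (∫ u, φ₁ u) = Φ₁)
    (φ₂ : Rd d → ℝ) (Φ₂ : ℝ) (hφ₂meas : Measurable φ₂) (hφ₂nn : ∀ u, 0 ≤ φ₂ u)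
    (hφ₂int : Integrable φ₂) (hφ₂val : (∫ u, φ₂ u) = Φ₂)
    (r γ T' : ℝ) (hr : 0 < r) (hγ : 0 < γ) (hT' : 0 < T')
    (ρ ψ : ℝ → Rd d → ℝ) (hρ : memB T' γ C2 r ρ) (hψ : memB T' γ C2 r ψ) :
    ∀ s ∈ Icc (0:ℝ) T', ∀ x : Rd d,
      |R2 c₁ c₂ φ₁ φ₂ (ρ s) x - R2 c₁ c₂ φ₁ φ₂ (ψ s) x| ≤
        (3/2 * C1 * Real.exp (γ * C2 * s) *
            (2 * Real.exp (γ * C2 * s) * r + Real.exp (2 * γ * C2 * s) * Φ₁ * r^2)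
          + 2 * C2 * Real.exp (γ * C2 * s) * (Real.exp (γ * C2 * s) * Φ₂ * r + 1))
          * normTg T' γ C2 (fun t x => ρ t x - ψ t x) := by
  intro s hs x
  set K := Real.exp (γ * C2 * s) with hK
  have ha : Measurable (ρ s) := (hρ.2.1 s hs).1
  have hb : Measurable (ψ s) := (hψ.2.1 s hs).1
  have hna : ∀ y, 0 ≤ ρ s y := hρ.2.2.1 s hs
  have hnb : ∀ y, 0 ≤ ψ s y := hψ.2.2.1 s hs
  have haM : ∀ y, ρ s y ≤ K * r := fun y => le_of_abs_le (memB_pointwise hρ hs y)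
  have hbM : ∀ y, ψ s y ≤ K * r := fun y => le_of_abs_le (memB_pointwise hψ hs y)
  have hab : ∀ y, |ρ s y - ψ s y|
      ≤ K * normTg T' γ C2 (fun t x => ρ t x - ψ t x) :=
    fun y => memB_diff_pointwise hρ hψ hs y
  have main := R2_lip c₁ C1 hc₁nn hc₁int₁₂ hc₁int₁₃ hc₁int₂₃ hc₁val₁₂ hc₁val₁₃ hc₁val₂₃
    c₂ C2 hc₂nn hc₂int₁ hc₂int₂ hc₂val₁ hc₂val₂
    φ₁ Φ₁ hφ₁meas hφ₁nn hφ₁int hφ₁val φ₂ Φ₂ hφ₂meas hφ₂nn hφ₂int hφ₂val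
    (ρ s) (ψ s) ha hb hna hnb (K * r)
    (K * normTg T' γ C2 (fun t x => ρ t x - ψ t x)) haM hbM hab x
  refine main.trans (le_of_eq ?_)
  have hK2 : Real.exp (2 * γ * C2 * s) = K * K := by
    rw [hK, ← Real.exp_add]; congr 1; ring
  rw [hK2]; ring
end
end

section
/- Let ρ, ψ ∈ L^∞(ℝ^d) with ρ, ψ ≥ 0 and ‖ρ‖_{L^∞}, ‖ψ‖_{L^∞} ≤ M. Then for every x ∈ ℝ^d, ∫ c₂(y;x) | exp(−∫ φ₂(x−u) ρ(u) du) ρ(y) − exp(−∫ φ₂(x−u) ψ(u) du) ψ(y) | dy ≤ ⟨c₂⟩ ( ⟨φ₂⟩ M + 1 ) ‖ρ − ψ‖_{L^∞}, and likewise ∫ c₂(x;y) | [1 − exp(−∫ φ₂(y−u) ρ(u) du)] ρ(x) − [1 − exp(−∫ φ₂(y−u) ψ(u) du)] ψ(x) | dy ≤ ⟨c₂⟩ ( ⟨φ₂⟩ M + 1 ) ‖ρ − ψ‖_{L^∞}. -/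
open MeasureTheory Set

noncomputable section

lemma exp_neg_lip {a b : ℝ} (ha : 0 ≤ a) (hb : 0 ≤ b) :
    |Real.exp (-a) - Real.exp (-b)| ≤ |a - b| := by
  have key : ∀ p q : ℝ, 0 ≤ q → q ≤ p → Real.exp (-q) - Real.exp (-p) ≤ p - q := by
    intro p q hq hqp
    have h1 : Real.exp (-q) - Real.exp (-p) = Real.exp (-q) * (1 - Real.exp (q - p)) := by
      rw [mul_sub, mul_one, ← Real.exp_add]; ring_nf
    have h2 : 1 - Real.exp (q - p) ≤ p - q := by
      have := Real.add_one_le_exp (q - p); linarith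
    have h3 : 0 ≤ 1 - Real.exp (q - p) := by
      have : Real.exp (q - p) ≤ 1 := Real.exp_le_one_iff.mpr (by linarith)
      linarith
    have h4 : Real.exp (-q) ≤ 1 := Real.exp_le_one_iff.mpr (by linarith)
    calc Real.exp (-q) - Real.exp (-p) = Real.exp (-q) * (1 - Real.exp (q - p)) := h1
      _ ≤ 1 * (p - q) := mul_le_mul h4 h2 h3 zero_le_one
      _ = p - q := one_mul _
  rcases le_total a b with h | h
  · have h5 := key b a ha h
    have h6 : Real.exp (-b) ≤ Real.exp (-a) := Real.exp_le_exp.mpr (by linarith)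
    rw [abs_of_nonneg (by linarith), abs_of_nonpos (by linarith)]; linarith
  · have h5 := key a b hb h
    have h6 : Real.exp (-a) ≤ Real.exp (-b) := Real.exp_le_exp.mpr (by linarith)
    rw [abs_of_nonpos (by linarith), abs_of_nonneg (by linarith)]; linarith

lemma intbound {d : ℕ} (c : Rd d → ℝ) (hc : Integrable c) (hcnn : ∀ y, 0 ≤ c y)
    (f : Rd d → ℝ) (K : ℝ) (hf : ∀ y, 0 ≤ f y) (hfK : ∀ y, f y ≤ K) :
    ∫ y, c y * f y ≤ (∫ y, c y) * K := by
  calc ∫ y, c y * f y ≤ ∫ y, c y * K := by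
        refine integral_mono_of_nonneg (ae_of_all _ fun y => mul_nonneg (hcnn y) (hf y))
          (hc.mul_const K) (ae_of_all _ fun y => mul_le_mul_of_nonneg_left (hfK y) (hcnn y))
    _ = (∫ y, c y) * K := integral_mul_const K c

theorem statement8 {d : ℕ} (hd : 1 ≤ d)
    (c₂ : Rd d → Rd d → ℝ) (C2 : ℝ)
    (hc₂meas : Measurable fun p : Rd d × Rd d => c₂ p.1 p.2)
    (hc₂nn : ∀ x y, 0 ≤ c₂ x y)
    (hc₂int₁ : ∀ y, Integrable fun x => c₂ x y)
    (hc₂int₂ : ∀ x, Integrable fun y => c₂ x y)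
    (hc₂val₁ : ∀ y, (∫ x, c₂ x y) = C2)
    (hc₂val₂ : ∀ x, (∫ y, c₂ x y) = C2)
    (φ₂ : Rd d → ℝ) (Φ₂ : ℝ) (hφ₂meas : Measurable φ₂) (hφ₂nn : ∀ u, 0 ≤ φ₂ u)
    (hφ₂int : Integrable φ₂) (hφ₂val : (∫ u, φ₂ u) = Φ₂)
    (ρ ψ : Rd d → ℝ) (hρmem : MemLinf ρ) (hρnn : ∀ x, 0 ≤ ρ x)
    (hψmem : MemLinf ψ) (hψnn : ∀ x, 0 ≤ ψ x)
    (M : ℝ) (hρM : linf ρ ≤ M) (hψM : linf ψ ≤ M) (x : Rd d) :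
    (∫ y, c₂ y x * |Real.exp (-∫ u, φ₂ (x - u) * ρ u) * ρ y
        - Real.exp (-∫ u, φ₂ (x - u) * ψ u) * ψ y|)
      ≤ C2 * (Φ₂ * M + 1) * linf (fun u => ρ u - ψ u) ∧
    (∫ y, c₂ x y * |(1 - Real.exp (-∫ u, φ₂ (y - u) * ρ u)) * ρ x
        - (1 - Real.exp (-∫ u, φ₂ (y - u) * ψ u)) * ψ x|)
      ≤ C2 * (Φ₂ * M + 1) * linf (fun u => ρ u - ψ u) := by
  obtain ⟨hρmeas, Mρ, hMρ⟩ := hρmem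
  obtain ⟨hψmeas, Mψ, hMψ⟩ := hψmem
  set N := linf (fun u => ρ u - ψ u) with hNdef
  have hbddd : BddAbove (Set.range fun u => |ρ u - ψ u|) := by
    refine ⟨Mρ + Mψ, ?_⟩
    rintro _ ⟨u, rfl⟩
    calc |ρ u - ψ u| ≤ |ρ u| + |ψ u| := abs_sub _ _
      _ ≤ Mρ + Mψ := add_le_add (hMρ u) (hMψ u)
  have hN : ∀ u, |ρ u - ψ u| ≤ N := fun u => le_ciSup hbddd u
  have hN0 : 0 ≤ N := le_trans (abs_nonneg _) (hN x)
  have hbddρ : BddAbove (Set.range fun u => |ρ u|) := ⟨Mρ, by rintro _ ⟨u, rfl⟩; exact hMρ u⟩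
  have hbddψ : BddAbove (Set.range fun u => |ψ u|) := ⟨Mψ, by rintro _ ⟨u, rfl⟩; exact hMψ u⟩
  have hρle : ∀ u, ρ u ≤ M := fun u =>
    le_trans (le_trans (le_abs_self _) (le_ciSup hbddρ u)) hρM
  have hψle : ∀ u, ψ u ≤ M := fun u =>
    le_trans (le_trans (le_abs_self _) (le_ciSup hbddψ u)) hψM
  have hM0 : 0 ≤ M := le_trans (hρnn x) (hρle x)
  have hΦ0 : 0 ≤ Φ₂ := hφ₂val ▸ integral_nonneg hφ₂nn
  -- Integral facts about A z and B z
  have hφz : ∀ z : Rd d, Integrable fun u => φ₂ (z - u) := fun z => hφ₂int.comp_sub_left z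
  have hφzval : ∀ z : Rd d, (∫ u, φ₂ (z - u)) = Φ₂ := by
    intro z; rw [← hφ₂val]; exact integral_sub_left_eq_self φ₂ _ z
  have hintρ : ∀ z : Rd d, Integrable fun u => φ₂ (z - u) * ρ u := by
    intro z
    have := (hφz z).bdd_mul hρmeas.aestronglyMeasurable
      (c := Mρ) (ae_of_all _ fun u => by simpa [Real.norm_eq_abs] using hMρ u)
    simpa [mul_comm] using this
  have hintψ : ∀ z : Rd d, Integrable fun u => φ₂ (z - u) * ψ u := by
    intro z
    have := (hφz z).bdd_mul hψmeas.aestronglyMeasurable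
      (c := Mψ) (ae_of_all _ fun u => by simpa [Real.norm_eq_abs] using hMψ u)
    simpa [mul_comm] using this
  have hA0 : ∀ z : Rd d, 0 ≤ ∫ u, φ₂ (z - u) * ρ u := fun z =>
    integral_nonneg fun u => mul_nonneg (hφ₂nn _) (hρnn u)
  have hB0 : ∀ z : Rd d, 0 ≤ ∫ u, φ₂ (z - u) * ψ u := fun z =>
    integral_nonneg fun u => mul_nonneg (hφ₂nn _) (hψnn u)
  have hAB : ∀ z : Rd d,
      |(∫ u, φ₂ (z - u) * ρ u) - ∫ u, φ₂ (z - u) * ψ u| ≤ Φ₂ * N := by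
    intro z
    rw [← integral_sub (hintρ z) (hintψ z)]
    calc |∫ u, (φ₂ (z - u) * ρ u - φ₂ (z - u) * ψ u)|
        ≤ ∫ u, φ₂ (z - u) * N := by
          have := norm_integral_le_of_norm_le (μ := volume)
            (f := fun u => φ₂ (z - u) * ρ u - φ₂ (z - u) * ψ u)
            (g := fun u => φ₂ (z - u) * N) ((hφz z).mul_const N)
            (ae_of_all _ fun u => by
              show ‖φ₂ (z - u) * ρ u - φ₂ (z - u) * ψ u‖ ≤ φ₂ (z - u) * N
              rw [Real.norm_eq_abs, ← mul_sub, abs_mul, abs_of_nonneg (hφ₂nn _)]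
              exact mul_le_mul_of_nonneg_left (hN u) (hφ₂nn _))
          simpa [Real.norm_eq_abs] using this
      _ = Φ₂ * N := by rw [integral_mul_const, hφzval]
  -- pointwise exponential difference bound
  have hexp : ∀ z : Rd d,
      |Real.exp (-∫ u, φ₂ (z - u) * ρ u) - Real.exp (-∫ u, φ₂ (z - u) * ψ u)| ≤ Φ₂ * N :=
    fun z => le_trans (exp_neg_lip (hA0 z) (hB0 z)) (hAB z)
  constructor
  · -- first integral
    have hpt : ∀ y : Rd d,
        |Real.exp (-∫ u, φ₂ (x - u) * ρ u) * ρ y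
          - Real.exp (-∫ u, φ₂ (x - u) * ψ u) * ψ y| ≤ (Φ₂ * M + 1) * N := by
      intro y
      set eA := Real.exp (-∫ u, φ₂ (x - u) * ρ u) with heA
      set eB := Real.exp (-∫ u, φ₂ (x - u) * ψ u) with heB
      have h1 : eA * ρ y - eB * ψ y = eA * (ρ y - ψ y) + (eA - eB) * ψ y := by ring
      have h2 : 0 ≤ eA := Real.exp_nonneg _
      have h3 : eA ≤ 1 := Real.exp_le_one_iff.mpr (by linarith [hA0 x])
      calc |eA * ρ y - eB * ψ y| = |eA * (ρ y - ψ y) + (eA - eB) * ψ y| := by rw [h1]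
        _ ≤ |eA * (ρ y - ψ y)| + |(eA - eB) * ψ y| := abs_add_le _ _
        _ = eA * |ρ y - ψ y| + |eA - eB| * ψ y := by
            rw [abs_mul, abs_mul, abs_of_nonneg h2, abs_of_nonneg (hψnn y)]
        _ ≤ 1 * N + (Φ₂ * N) * M := by
            refine add_le_add (mul_le_mul h3 (hN y) (abs_nonneg _) zero_le_one)
              (mul_le_mul (hexp x) (hψle y) (hψnn y) (by positivity))
        _ = (Φ₂ * M + 1) * N := by ring
    have := intbound (fun y => c₂ y x) (hc₂int₁ x) (fun y => hc₂nn y x)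
      _ ((Φ₂ * M + 1) * N) (fun y => abs_nonneg _) hpt
    rw [hc₂val₁ x] at this
    calc (∫ y, c₂ y x * |Real.exp (-∫ u, φ₂ (x - u) * ρ u) * ρ y
          - Real.exp (-∫ u, φ₂ (x - u) * ψ u) * ψ y|) ≤ C2 * ((Φ₂ * M + 1) * N) := this
      _ = C2 * (Φ₂ * M + 1) * N := by ring
  · -- second integral
    have hpt : ∀ y : Rd d,
        |(1 - Real.exp (-∫ u, φ₂ (y - u) * ρ u)) * ρ x
          - (1 - Real.exp (-∫ u, φ₂ (y - u) * ψ u)) * ψ x| ≤ (Φ₂ * M + 1) * N := by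
      intro y
      set eA := Real.exp (-∫ u, φ₂ (y - u) * ρ u) with heA
      set eB := Real.exp (-∫ u, φ₂ (y - u) * ψ u) with heB
      have h1 : (1 - eA) * ρ x - (1 - eB) * ψ x
          = (1 - eA) * (ρ x - ψ x) + (eB - eA) * ψ x := by ring
      have h2 : 0 ≤ eA := Real.exp_nonneg _
      have h3 : eA ≤ 1 := Real.exp_le_one_iff.mpr (by linarith [hA0 y])
      have h4 : |eB - eA| ≤ Φ₂ * N := by rw [abs_sub_comm]; exact hexp y
      calc |(1 - eA) * ρ x - (1 - eB) * ψ x|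
          = |(1 - eA) * (ρ x - ψ x) + (eB - eA) * ψ x| := by rw [h1]
        _ ≤ |(1 - eA) * (ρ x - ψ x)| + |(eB - eA) * ψ x| := abs_add_le _ _
        _ = (1 - eA) * |ρ x - ψ x| + |eB - eA| * ψ x := by
            rw [abs_mul, abs_mul, abs_of_nonneg (by linarith), abs_of_nonneg (hψnn x)]
        _ ≤ 1 * N + (Φ₂ * N) * M := by
            refine add_le_add (mul_le_mul (by linarith) (hN x) (abs_nonneg _) zero_le_one)
              (mul_le_mul h4 (hψle x) (hψnn x) (by positivity))
        _ = (Φ₂ * M + 1) * N := by ring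
    have := intbound (fun y => c₂ x y) (hc₂int₂ x) (fun y => hc₂nn x y)
      _ ((Φ₂ * M + 1) * N) (fun y => abs_nonneg _) hpt
    rw [hc₂val₂ x] at this
    calc (∫ y, c₂ x y * |(1 - Real.exp (-∫ u, φ₂ (y - u) * ρ u)) * ρ x
          - (1 - Real.exp (-∫ u, φ₂ (y - u) * ψ u)) * ψ x|)
        ≤ C2 * ((Φ₂ * M + 1) * N) := this
      _ = C2 * (Φ₂ * M + 1) * N := by ring
end
end
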